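/- arXiv:2410.18075 — 2 statements merged into one kernel-verified Lean document; each statement's English description precedes it below -/
import Mathlib

section
/- Let α₁, …, α_N be probability weights (αᵢ ≥ 0, Σᵢ αᵢ = 1), let γ₁, …, γ_N ≥ 0, and for each i let Lᵢ : ℝ^d → ℝ be differentiable with β(1+γᵢ)-Lipschitz gradient. Set L = Σᵢ αᵢ Lᵢ and γ̄ = Σᵢ αᵢ γᵢ, and suppose L satisfies the Polyak–Łojasiewicz (PL) condition with constant ρ > 0 relative to a value L*, i.e., (1/2)‖∇L(θ)‖² ≥ ρ(L(θ) − L*) for all θ. Then for any points θ̄, θ₁, …, θ_N ∈ ℝ^d, any vectors g₁, …, g_N ∈ ℝ^d with g = Σᵢ αᵢ gᵢ, and any η > 0: L(θ̄ − ηg) − L* ≤ (1 − ρη)(L(θ̄) − L*) + η Σᵢ αᵢ β²(1+γᵢ)² ‖θ̄ − θᵢ‖² + η ‖Σᵢ αᵢ ∇Lᵢ(θᵢ) − g‖² − (η/2)‖g‖² + (β(1+γ̄)η²/2)‖g‖². -/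
open InnerProductSpace Finset

section Aux
variable {E : Type*} [NormedAddCommGroup E] [InnerProductSpace ℝ E] [CompleteSpace E]

/-- gradient of finite weighted sum -/
lemma gradient_weighted_sum {N : ℕ} (a : Fin N → ℝ) (f : Fin N → E → ℝ)
    (hf : ∀ i, Differentiable ℝ (f i)) (x : E) :
    gradient (fun θ => ∑ i, a i * f i θ) x = ∑ i, a i • gradient (f i) x := by
  have h : HasFDerivAt (fun θ => ∑ i, a i * f i θ)
      (∑ i, a i • (toDual ℝ E (gradient (f i) x) : E →L[ℝ] ℝ)) x := by
    have := fun i => ((hf i x).hasGradientAt.hasFDerivAt).const_smul (a i)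
    simpa using HasFDerivAt.fun_sum (fun i _ => this i)
  have h2 : (∑ i, a i • (toDual ℝ E (gradient (f i) x) : E →L[ℝ] ℝ))
      = toDual ℝ E (∑ i, a i • gradient (f i) x) := by
    rw [map_sum]
    simp [map_smul]
  rw [h2] at h
  exact (hasFDerivAt_iff_hasGradientAt.mp h).gradient.trans (LinearIsometryEquiv.symm_apply_apply _ _)

/-- descent lemma -/
lemma descent_lemma (f : E → ℝ) (hf : Differentiable ℝ f) (C : ℝ)
    (hLip : ∀ x y, ‖gradient f x - gradient f y‖ ≤ C * ‖x - y‖) (x v : E) :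
    f (x + v) ≤ f x + inner ℝ (gradient f x) v + C / 2 * ‖v‖ ^ 2 := by
  set φ : ℝ → ℝ := fun t => f (x + t • v) - t * inner ℝ (gradient f x) v - C * t ^ 2 * ‖v‖ ^ 2 / 2
    with hφ
  have hderiv : ∀ t : ℝ, HasDerivAt φ
      ((inner ℝ (gradient f (x + t • v)) v : ℝ) - inner ℝ (gradient f x) v - C * t * ‖v‖ ^ 2) t := by
    intro t
    have hline : HasDerivAt (fun t : ℝ => x + t • v) v t := by
      simpa using ((hasDerivAt_id t).smul_const v).const_add x
    have h1 : HasDerivAt (fun t : ℝ => f (x + t • v))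
        ((inner ℝ (gradient f (x + t • v)) v : ℝ)) t := by
      have := ((hf (x + t • v)).hasGradientAt.hasFDerivAt).comp_hasDerivAt t hline
      exact this.congr_deriv (by rw [toDual_apply_apply])
    have h2 : HasDerivAt (fun t : ℝ => t * (inner ℝ (gradient f x) v : ℝ))
        (inner ℝ (gradient f x) v : ℝ) t := by
      simpa using (hasDerivAt_id t).mul_const (inner ℝ (gradient f x) v : ℝ)
    have h3 : HasDerivAt (fun t : ℝ => C * t ^ 2 * ‖v‖ ^ 2 / 2) (C * t * ‖v‖ ^ 2) t := by
      have : HasDerivAt (fun t : ℝ => t ^ 2) (2 * t) t := by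
        simpa using hasDerivAt_pow 2 t
      have := ((this.const_mul C).mul_const (‖v‖ ^ 2)).div_const 2
      exact this.congr_deriv (by ring)
    exact (h1.sub h2).sub h3
  have hmono : AntitoneOn φ (Set.Icc (0:ℝ) 1) := by
    apply antitoneOn_of_deriv_nonpos (convex_Icc 0 1)
    · exact fun t _ => ((hderiv t).differentiableAt).continuousAt.continuousWithinAt
    · exact fun t _ => ((hderiv t).differentiableAt).differentiableWithinAt
    · intro t ht
      rw [interior_Icc] at ht
      rw [(hderiv t).deriv]
      have h1 : (inner ℝ (gradient f (x + t • v)) v : ℝ) - inner ℝ (gradient f x) v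
          = inner ℝ (gradient f (x + t • v) - gradient f x) v := by
        rw [inner_sub_left]
      rw [h1]
      have h2 : (inner ℝ (gradient f (x + t • v) - gradient f x) v : ℝ)
          ≤ ‖gradient f (x + t • v) - gradient f x‖ * ‖v‖ := real_inner_le_norm _ _
      have h3 : ‖gradient f (x + t • v) - gradient f x‖ ≤ C * ‖(x + t • v) - x‖ :=
        hLip _ _
      have h4 : ‖(x + t • v) - x‖ = t * ‖v‖ := by
        simp [norm_smul, abs_of_pos ht.1]
      nlinarith [norm_nonneg v,
        mul_le_mul_of_nonneg_right (h3.trans_eq (by rw [h4])) (norm_nonneg v), h2]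
  have := hmono (Set.mem_Icc.mpr ⟨le_refl 0, zero_le_one⟩)
    (Set.mem_Icc.mpr ⟨zero_le_one, le_refl 1⟩) zero_le_one
  simp only [hφ, zero_smul, add_zero, one_smul, zero_mul, sub_zero, zero_pow, mul_zero,
    zero_div] at this
  nlinarith [this]

/-- Jensen for squared norm -/
lemma norm_sq_weighted_sum_le {N : ℕ} (a : Fin N → ℝ) (ha : ∀ i, 0 ≤ a i)
    (hsum : ∑ i, a i = 1) (v : Fin N → E) :
    ‖∑ i, a i • v i‖ ^ 2 ≤ ∑ i, a i * ‖v i‖ ^ 2 := by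
  have h1 : ‖∑ i, a i • v i‖ ≤ ∑ i, a i * ‖v i‖ := by
    refine (norm_sum_le _ _).trans (le_of_eq ?_)
    congr 1; ext i; rw [norm_smul, Real.norm_eq_abs, abs_of_nonneg (ha i)]
  have h2 : (∑ i, a i * ‖v i‖) ^ 2 ≤ (∑ i, a i) * ∑ i, a i * ‖v i‖ ^ 2 := by
    apply Finset.sum_sq_le_sum_mul_sum_of_sq_eq_mul
    · exact fun i _ => ha i
    · exact fun i _ => mul_nonneg (ha i) (sq_nonneg _)
    · intro i _; ring
  rw [hsum, one_mul] at h2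
  calc ‖∑ i, a i • v i‖ ^ 2 ≤ (∑ i, a i * ‖v i‖) ^ 2 :=
        pow_le_pow_left₀ (norm_nonneg _) h1 2
    _ ≤ _ := h2

end Aux

/-- Per-round federated descent inequality under the PL condition with client drift
and inexact local gradients. -/
theorem federated_pl_descent {d N : ℕ} (α γ : Fin N → ℝ)
    (hα : ∀ i, 0 ≤ α i) (hαsum : ∑ i, α i = 1) (hγ : ∀ i, 0 ≤ γ i)
    (β : ℝ)
    (Li : Fin N → EuclideanSpace ℝ (Fin d) → ℝ)
    (hLi : ∀ i, Differentiable ℝ (Li i))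
    (hLip : ∀ i θ θ',
      ‖gradient (Li i) θ - gradient (Li i) θ'‖ ≤ β * (1 + γ i) * ‖θ - θ'‖)
    (L : EuclideanSpace ℝ (Fin d) → ℝ) (hLdef : L = fun θ => ∑ i, α i * Li i θ)
    (γbar : ℝ) (hγbar : γbar = ∑ i, α i * γ i)
    (ρ : ℝ) (hρ : 0 < ρ) (Lstar : ℝ)
    (hPL : ∀ θ, ρ * (L θ - Lstar) ≤ (1/2) * ‖gradient L θ‖^2)
    (θbar : EuclideanSpace ℝ (Fin d)) (θi gi : Fin N → EuclideanSpace ℝ (Fin d))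
    (g : EuclideanSpace ℝ (Fin d)) (hg : g = ∑ i, α i • gi i)
    (η : ℝ) (hη : 0 < η) :
    L (θbar - η • g) - Lstar
      ≤ (1 - ρ * η) * (L θbar - Lstar)
        + η * ∑ i, α i * β^2 * (1 + γ i)^2 * ‖θbar - θi i‖^2
        + η * ‖(∑ i, α i • gradient (Li i) (θi i)) - g‖^2
        - (η/2) * ‖g‖^2
        + (β * (1 + γbar) * η^2 / 2) * ‖g‖^2 := by
  set C := β * (1 + γbar) with hC
  have hgradL : ∀ x, gradient L x = ∑ i, α i • gradient (Li i) x := by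
    intro x; rw [hLdef]; exact gradient_weighted_sum α Li hLi x
  have hLdiff : Differentiable ℝ L := by
    rw [hLdef]
    exact Differentiable.fun_sum fun i _ => (hLi i).const_mul (α i)
  -- Lipschitz gradient of L
  have hLipL : ∀ x y, ‖gradient L x - gradient L y‖ ≤ C * ‖x - y‖ := by
    intro x y
    rw [hgradL, hgradL, ← Finset.sum_sub_distrib]
    have hrw : ∀ i : Fin N, α i • gradient (Li i) x - α i • gradient (Li i) y
        = α i • (gradient (Li i) x - gradient (Li i) y) := fun i => (smul_sub _ _ _).symm
    calc ‖∑ i, (α i • gradient (Li i) x - α i • gradient (Li i) y)‖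
        ≤ ∑ i, ‖α i • (gradient (Li i) x - gradient (Li i) y)‖ := by
          rw [Finset.sum_congr rfl fun i _ => hrw i]; exact norm_sum_le _ _
      _ ≤ ∑ i, α i * (β * (1 + γ i) * ‖x - y‖) := by
          apply Finset.sum_le_sum; intro i _
          rw [norm_smul, Real.norm_eq_abs, abs_of_nonneg (hα i)]
          exact mul_le_mul_of_nonneg_left (hLip i x y) (hα i)
      _ = β * ‖x - y‖ * ∑ i, (α i + α i * γ i) := by
          rw [Finset.mul_sum]; apply Finset.sum_congr rfl; intro i _; ring
      _ = C * ‖x - y‖ := by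
          rw [Finset.sum_add_distrib, hαsum, hC, ← hγbar]; ring
  set G := gradient L θbar with hG
  set H := ∑ i, α i • gradient (Li i) (θi i) with hH
  -- descent lemma
  have hdes := descent_lemma L hLdiff C hLipL θbar (-(η • g))
  have heq : θbar - η • g = θbar + -(η • g) := by rw [sub_eq_add_neg]
  have hinner : (inner ℝ G (-(η • g)) : ℝ) = -(η * inner ℝ G g) := by
    rw [inner_neg_right, real_inner_smul_right]
  have hnv : ‖-(η • g)‖ ^ 2 = η ^ 2 * ‖g‖ ^ 2 := by
    rw [norm_neg, norm_smul, Real.norm_eq_abs, mul_pow, sq_abs]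
  rw [← heq, hinner, hnv] at hdes
  -- polarization
  have hpolar : ‖G - g‖ ^ 2 = ‖G‖ ^ 2 - 2 * inner ℝ G g + ‖g‖ ^ 2 := norm_sub_sq_real G g
  -- drift bound
  have hGH : ‖G - H‖ ^ 2 ≤ ∑ i, α i * β^2 * (1 + γ i)^2 * ‖θbar - θi i‖^2 := by
    have hrepr : G - H = ∑ i, α i • (gradient (Li i) θbar - gradient (Li i) (θi i)) := by
      rw [hG, hgradL, hH, ← Finset.sum_sub_distrib]
      exact Finset.sum_congr rfl fun i _ => (smul_sub _ _ _).symm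
    rw [hrepr]
    refine (norm_sq_weighted_sum_le α hα hαsum _).trans ?_
    apply Finset.sum_le_sum
    intro i _
    have h1 : ‖gradient (Li i) θbar - gradient (Li i) (θi i)‖ ^ 2
        ≤ (β * (1 + γ i) * ‖θbar - θi i‖) ^ 2 :=
      pow_le_pow_left₀ (norm_nonneg _) (hLip i _ _) 2
    calc α i * ‖gradient (Li i) θbar - gradient (Li i) (θi i)‖ ^ 2
        ≤ α i * (β * (1 + γ i) * ‖θbar - θi i‖) ^ 2 := mul_le_mul_of_nonneg_left h1 (hα i)
      _ = α i * β^2 * (1 + γ i)^2 * ‖θbar - θi i‖^2 := by ring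
  -- triangle
  have htri : ‖G - g‖ ^ 2 ≤ 2 * ‖G - H‖ ^ 2 + 2 * ‖H - g‖ ^ 2 := by
    have h1 : ‖G - g‖ ≤ ‖G - H‖ + ‖H - g‖ := by
      have : G - g = (G - H) + (H - g) := by abel
      rw [this]; exact norm_add_le _ _
    have h2 : ‖G - g‖ ^ 2 ≤ (‖G - H‖ + ‖H - g‖) ^ 2 := pow_le_pow_left₀ (norm_nonneg _) h1 2
    nlinarith [h2, sq_nonneg (‖G - H‖ - ‖H - g‖)]
  have hpl := hPL θbar
  -- products
  have P1 : η * (ρ * (L θbar - Lstar)) ≤ η * ((1/2) * ‖G‖ ^ 2) :=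
    mul_le_mul_of_nonneg_left hpl hη.le
  have P2 : η * ‖G - g‖ ^ 2 ≤ η * (2 * (∑ i, α i * β^2 * (1 + γ i)^2 * ‖θbar - θi i‖^2)
      + 2 * ‖H - g‖ ^ 2) :=
    mul_le_mul_of_nonneg_left (htri.trans (by linarith)) hη.le
  have P3 : η * ‖G - g‖ ^ 2 = η * (‖G‖ ^ 2 - 2 * inner ℝ G g + ‖g‖ ^ 2) := by rw [hpolar]
  linarith [hdes, P1, P2, P3]
end

section
/- Let L : ℝ^d → ℝ be differentiable with β-Lipschitz gradient, satisfying the Polyak–Łojasiewicz (PL) condition with constant ρ > 0 relative to a value L*, i.e., (1/2)‖∇L(θ)‖² ≥ ρ(L(θ) − L*) for all θ. Fix η > 0 with ρη ≤ 1 and βη ≤ 1, and let (θ_t)_{t≥0} be generated by θ_{t+1} = θ_t − η g_t. If for every t the gradient-estimation error satisfies ‖∇L(θ_t) − g_t‖² ≤ (1 − βη)‖g_t‖², then for every T ≥ 0: L(θ_T) − L* ≤ (1 − ρη)^T (L(θ₀) − L*), i.e., the iterates converge to the optimal value at a linear rate. -/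
open scoped RealInnerProductSpace

lemma descent_step {d : ℕ} (L : EuclideanSpace ℝ (Fin d) → ℝ) (hL : Differentiable ℝ L)
    (β : ℝ) (hLip : ∀ θ θ', ‖gradient L θ - gradient L θ'‖ ≤ β * ‖θ - θ'‖)
    (x v : EuclideanSpace ℝ (Fin d)) :
    L (x + v) ≤ L x + ⟪gradient L x, v⟫ + β / 2 * ‖v‖ ^ 2 := by
  set φ : ℝ → ℝ := fun s =>
    L (x + s • v) - s * ⟪gradient L x, v⟫ - s ^ 2 * (β * ‖v‖ ^ 2 / 2) with hφ
  have hderiv : ∀ s : ℝ, HasDerivAt φ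
      (⟪gradient L (x + s • v), v⟫ - ⟪gradient L x, v⟫ - s * (β * ‖v‖ ^ 2)) s := by
    intro s
    have h1 : HasDerivAt (fun s : ℝ => x + s • v) v s := by
      simpa using ((hasDerivAt_id s).smul_const v).const_add x
    have h2 : HasDerivAt (fun s : ℝ => L (x + s • v)) (⟪gradient L (x + s • v), v⟫) s := by
      have := ((hL (x + s • v)).hasGradientAt.hasFDerivAt).comp_hasDerivAt s h1
      simp at this ⊢
      exact this
    have h3 : HasDerivAt (fun s : ℝ => s * ⟪gradient L x, v⟫) (⟪gradient L x, v⟫) s := by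
      simpa using (hasDerivAt_id s).mul_const (⟪gradient L x, v⟫)
    have h4 : HasDerivAt (fun s : ℝ => s ^ 2 * (β * ‖v‖ ^ 2 / 2)) (s * (β * ‖v‖ ^ 2)) s := by
      have : HasDerivAt (fun s : ℝ => s ^ 2 * (β * ‖v‖ ^ 2 / 2)) ((2 : ℕ) * s ^ (2 - 1) * (β * ‖v‖ ^ 2 / 2)) s := (hasDerivAt_pow 2 s).mul_const (β * ‖v‖ ^ 2 / 2)
      convert this using 1
      push_cast
      ring
    exact (h2.sub h3).sub h4
  have hmono : AntitoneOn φ (Set.Icc (0:ℝ) 1) := by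
    apply antitoneOn_of_deriv_nonpos (convex_Icc 0 1)
    · exact (Differentiable.continuous fun s => (hderiv s).differentiableAt).continuousOn
    · exact fun s _ => (hderiv s).differentiableAt.differentiableWithinAt
    · intro s hs
      rw [(hderiv s).deriv]
      rw [interior_Icc] at hs
      have hCS : ⟪gradient L (x + s • v) - gradient L x, v⟫ ≤
          ‖gradient L (x + s • v) - gradient L x‖ * ‖v‖ := real_inner_le_norm _ _
      have hLip' := hLip (x + s • v) x
      have h5 : ‖(x + s • v) - x‖ = s * ‖v‖ := by
        rw [add_sub_cancel_left, norm_smul, Real.norm_eq_abs, abs_of_pos hs.1]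
      rw [h5] at hLip'
      have : ⟪gradient L (x + s • v) - gradient L x, v⟫ ≤ s * (β * ‖v‖ ^ 2) := by
        calc ⟪gradient L (x + s • v) - gradient L x, v⟫
            ≤ ‖gradient L (x + s • v) - gradient L x‖ * ‖v‖ := hCS
          _ ≤ β * (s * ‖v‖) * ‖v‖ := by
              apply mul_le_mul_of_nonneg_right hLip' (norm_nonneg _)
          _ = s * (β * ‖v‖ ^ 2) := by ring
      rw [inner_sub_left] at this
      linarith
  have := hmono (Set.left_mem_Icc.2 zero_le_one) (Set.right_mem_Icc.2 zero_le_one) zero_le_one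
  have h0 : φ 0 = L x := by simp [hφ]
  have h1 : φ 1 = L (x + v) - ⟪gradient L x, v⟫ - β * ‖v‖ ^ 2 / 2 := by
    simp [hφ]
  rw [h0, h1] at this
  linarith

/-- Linear convergence of inexact gradient descent under the PL condition when the
squared gradient-estimation error stays below a fixed fraction of the squared
update direction. -/
theorem pl_inexact_gd_linear_rate {d : ℕ}
    (L : EuclideanSpace ℝ (Fin d) → ℝ) (hL : Differentiable ℝ L)
    (β : ℝ) (hLip : ∀ θ θ', ‖gradient L θ - gradient L θ'‖ ≤ β * ‖θ - θ'‖)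
    (ρ : ℝ) (hρ : 0 < ρ) (Lstar : ℝ)
    (hPL : ∀ θ, ρ * (L θ - Lstar) ≤ (1/2) * ‖gradient L θ‖^2)
    (η : ℝ) (hη : 0 < η) (hρη : ρ * η ≤ 1) (hβη : β * η ≤ 1)
    (θ g : ℕ → EuclideanSpace ℝ (Fin d))
    (hupd : ∀ t, θ (t + 1) = θ t - η • g t)
    (herr : ∀ t, ‖gradient L (θ t) - g t‖^2 ≤ (1 - β * η) * ‖g t‖^2) :
    ∀ T : ℕ, L (θ T) - Lstar ≤ (1 - ρ * η) ^ T * (L (θ 0) - Lstar) := by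
  have hstep : ∀ t, L (θ (t+1)) - Lstar ≤ (1 - ρ * η) * (L (θ t) - Lstar) := by
    intro t
    set G := gradient L (θ t) with hG
    have hdes := descent_step L hL β hLip (θ t) (-(η • g t))
    have hθ : θ (t+1) = θ t + -(η • g t) := by rw [hupd t]; abel
    rw [← hθ] at hdes
    have hin : ⟪G, -(η • g t)⟫ = -(η * ⟪G, g t⟫) := by
      rw [inner_neg_right, real_inner_smul_right]
    have hnrm : ‖-(η • g t)‖ ^ 2 = η ^ 2 * ‖g t‖ ^ 2 := by
      rw [norm_neg, norm_smul, Real.norm_eq_abs, abs_of_pos hη, mul_pow]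
    rw [hin, hnrm] at hdes
    have hexp : ‖G - g t‖ ^ 2 = ‖G‖ ^ 2 - 2 * ⟪G, g t⟫ + ‖g t‖ ^ 2 :=
      norm_sub_sq_real G (g t)
    have he := herr t
    rw [← hG, hexp] at he
    -- 2⟪G,g⟫ ≥ ‖G‖² + βη‖g‖²
    have key : L (θ (t+1)) ≤ L (θ t) - η / 2 * ‖G‖ ^ 2 := by nlinarith
    have hpl := hPL (θ t)
    rw [← hG] at hpl
    nlinarith
  intro T
  induction T with
  | zero => simp
  | succ T ih =>
    have h1 : (0:ℝ) ≤ 1 - ρ * η := by linarith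
    calc L (θ (T+1)) - Lstar ≤ (1 - ρ * η) * (L (θ T) - Lstar) := hstep T
      _ ≤ (1 - ρ * η) * ((1 - ρ * η) ^ T * (L (θ 0) - Lstar)) :=
          mul_le_mul_of_nonneg_left ih h1
      _ = (1 - ρ * η) ^ (T+1) * (L (θ 0) - Lstar) := by ring
end
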